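/- Let M be the maximum load when m' balls are thrown uniformly at random into n bins, and suppose P(M ≥ j) ≤ C(m', j)·(1/n)^{j-1} for all j. If m' ≤ 2(n log n)^{3/5} and n is sufficiently large, then E[M] ≤ 4 + o(1); in particular E[M] ≤ 5 for all sufficiently large n. -/

import Mathlib

open MeasureTheory Filter ENNReal Asymptotics

theorem expected_max_load_le_five : ∃ n₀ : ℕ, ∀ n : ℕ, n₀ ≤ n → ∀ m' : ℕ,
    (m' : ℝ) ≤ 2 * ((n : ℝ) * Real.log n) ^ ((3 : ℝ) / 5) →
    ∀ (Ω : Type) (_ : MeasurableSpace Ω) (μ : Measure Ω) (_ : IsProbabilityMeasure μ)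
      (M : Ω → ℕ), Measurable M → Integrable (fun ω => (M ω : ℝ)) μ →
    (∀ j : ℕ, 1 ≤ j →
      μ {ω | j ≤ M ω} ≤ ENNReal.ofReal ((m'.choose j : ℝ) * (1 / (n : ℝ)) ^ (j - 1))) →
    ∫ ω, (M ω : ℝ) ∂μ ≤ 5 := by
  -- asymptotic facts
  have ho1 : (fun x : ℝ => (Real.log x) ^ 3) =o[atTop] (fun x : ℝ => x) := by
    have h := (isLittleO_log_rpow_atTop (by norm_num : (0:ℝ) < 1/3)).pow
      (n := 3) (by norm_num)
    have heq : (fun x : ℝ => (x ^ ((1:ℝ)/3)) ^ (3:ℕ)) =ᶠ[atTop] (fun x : ℝ => x) := by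
      filter_upwards [eventually_ge_atTop (0:ℝ)] with x hx
      rw [← Real.rpow_natCast (x ^ ((1:ℝ)/3)) 3, ← Real.rpow_mul hx]
      norm_num
    exact h.trans_isBigO heq.isBigO
  have ho2 : Real.log =o[atTop] (fun x : ℝ => x ^ ((2:ℝ)/3)) :=
    isLittleO_log_rpow_atTop (by norm_num)
  have hev : ∀ᶠ x : ℝ in atTop,
      64 * (Real.log x) ^ 3 ≤ x ∧ 11 * Real.log x ≤ x ^ ((2:ℝ)/3) ∧ (2:ℝ) ≤ x := by
    filter_upwards [ho1.def (by norm_num : (0:ℝ) < 1/64),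
      ho2.def (by norm_num : (0:ℝ) < 1/11), eventually_ge_atTop (2:ℝ)] with x h1 h2 hx2
    have hx0 : (0:ℝ) ≤ x := by linarith
    have hl0 : 0 ≤ Real.log x := Real.log_nonneg (by linarith)
    refine ⟨?_, ?_, hx2⟩
    · have := h1
      rw [Real.norm_eq_abs, Real.norm_eq_abs, abs_of_nonneg (by positivity),
        abs_of_nonneg hx0] at this
      linarith
    · have := h2
      rw [Real.norm_eq_abs, Real.norm_eq_abs, abs_of_nonneg hl0,
        abs_of_nonneg (by positivity)] at this
      linarith
  obtain ⟨n₀, hn₀⟩ := eventually_atTop.mp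
    ((tendsto_natCast_atTop_atTop (R := ℝ)).eventually hev)
  refine ⟨max n₀ 2, fun n hn m' hm Ω _ μ _ M hM hInt hTail => ?_⟩
  obtain ⟨h64, h11, hn2⟩ := hn₀ n (le_trans (le_max_left _ _) hn)
  have hn0 : (0:ℝ) < n := by linarith
  have hl0 : 0 ≤ Real.log n := Real.log_nonneg (by linarith)
  have hnl0 : 0 ≤ (n:ℝ) * Real.log n := by positivity
  have hm0 : (0:ℝ) ≤ m' := Nat.cast_nonneg _
  -- 4^(5/3) ≤ 11
  have h4 : (4:ℝ) ^ ((5:ℝ)/3) ≤ 11 := by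
    have h40 : (0:ℝ) ≤ (4:ℝ) ^ ((5:ℝ)/3) := by positivity
    refine le_of_pow_le_pow_left₀ (n := 3) (by norm_num) (by norm_num) ?_
    rw [← Real.rpow_natCast ((4:ℝ) ^ ((5:ℝ)/3)) 3, ← Real.rpow_mul (by norm_num)]
    norm_num
  -- (A) m' * 2 ≤ n
  have hA : (m':ℝ) * 2 ≤ n := by
    have key : ((n:ℝ) * Real.log n) ^ ((3:ℝ)/5) ≤ (n:ℝ) / 4 := by
      have h45 : (0:ℝ) < (4:ℝ) ^ ((5:ℝ)/3) := by positivity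
      have hstep : (n:ℝ) * Real.log n ≤ ((n:ℝ)/4) ^ ((5:ℝ)/3) := by
        have e1 : ((n:ℝ)/4) ^ ((5:ℝ)/3) = (n:ℝ) ^ ((5:ℝ)/3) / (4:ℝ) ^ ((5:ℝ)/3) :=
          Real.div_rpow (le_of_lt hn0) (by norm_num) _
        have e2 : (n:ℝ) ^ ((5:ℝ)/3) = (n:ℝ) * (n:ℝ) ^ ((2:ℝ)/3) := by
          rw [show (5:ℝ)/3 = 1 + (2:ℝ)/3 by norm_num, Real.rpow_add hn0, Real.rpow_one]
        rw [e1, e2]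
        have hlog : Real.log n ≤ (n:ℝ) ^ ((2:ℝ)/3) / (4:ℝ) ^ ((5:ℝ)/3) := by
          have : (n:ℝ) ^ ((2:ℝ)/3) / 11 ≤ (n:ℝ) ^ ((2:ℝ)/3) / (4:ℝ) ^ ((5:ℝ)/3) := by
            apply div_le_div_of_nonneg_left (by positivity) h45 h4
          have hlog11 : Real.log n ≤ (n:ℝ) ^ ((2:ℝ)/3) / 11 := by linarith
          linarith
        calc (n:ℝ) * Real.log n ≤ (n:ℝ) * ((n:ℝ) ^ ((2:ℝ)/3) / (4:ℝ) ^ ((5:ℝ)/3)) :=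
              mul_le_mul_of_nonneg_left hlog (le_of_lt hn0)
          _ = (n:ℝ) * (n:ℝ) ^ ((2:ℝ)/3) / (4:ℝ) ^ ((5:ℝ)/3) := by ring
      have := Real.rpow_le_rpow hnl0 hstep (by norm_num : (0:ℝ) ≤ 3/5)
      rwa [← Real.rpow_mul (by positivity : (0:ℝ) ≤ (n:ℝ)/4),
        show (5:ℝ)/3 * (3/5) = 1 by norm_num, Real.rpow_one] at this
    linarith
  -- (B) m'^5 * 2 ≤ n^4
  have hB : (m':ℝ) ^ 5 * 2 ≤ (n:ℝ) ^ 4 := by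
    have h1 : (m':ℝ) ^ 5 ≤ (2 * ((n:ℝ) * Real.log n) ^ ((3:ℝ)/5)) ^ 5 :=
      pow_le_pow_left₀ hm0 hm 5
    have h2 : (((n:ℝ) * Real.log n) ^ ((3:ℝ)/5)) ^ (5:ℕ) = ((n:ℝ) * Real.log n) ^ (3:ℕ) := by
      rw [← Real.rpow_natCast (((n:ℝ) * Real.log n) ^ ((3:ℝ)/5)) 5, ← Real.rpow_mul hnl0]
      norm_num
    have h3 : (2 * ((n:ℝ) * Real.log n) ^ ((3:ℝ)/5)) ^ 5
        = 32 * ((n:ℝ)^3 * (Real.log n)^3) := by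
      rw [mul_pow, h2, mul_pow]
      norm_num
    have h5 : 64 * ((n:ℝ)^3 * (Real.log n)^3) ≤ (n:ℝ)^3 * n := by
      have := mul_le_mul_of_nonneg_left h64 (by positivity : (0:ℝ) ≤ (n:ℝ)^3)
      linarith [this]
    have : (n:ℝ)^3 * n = (n:ℝ)^4 := by ring
    nlinarith [h1, h3, h5]
  -- per-term tail bound
  have hterm : ∀ j : ℕ, (m'.choose (j+5) : ℝ) * (1/(n:ℝ)) ^ (j+4) ≤ (1/2:ℝ) ^ (j+1) := by
    intro j
    have hc : (m'.choose (j+5) : ℝ) ≤ (m':ℝ) ^ (j+5) := by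
      exact_mod_cast Nat.cast_le.mpr (Nat.choose_le_pow m' (j+5))
    have hinv : (0:ℝ) ≤ 1/(n:ℝ) := by positivity
    have e : (m':ℝ) ^ (j+5) * (1/(n:ℝ)) ^ (j+4)
        = ((m':ℝ)^5 * (1/(n:ℝ))^4) * ((m':ℝ) * (1/(n:ℝ))) ^ j := by
      rw [mul_pow]; ring
    have hf1 : (m':ℝ)^5 * (1/(n:ℝ))^4 ≤ 1/2 := by
      rw [div_pow, one_pow, mul_one_div, div_le_div_iff₀ (by positivity) (by norm_num)]
      linarith
    have hf2 : (m':ℝ) * (1/(n:ℝ)) ≤ 1/2 := by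
      rw [mul_one_div, div_le_div_iff₀ hn0 (by norm_num)]
      linarith
    have hf2' : ((m':ℝ) * (1/(n:ℝ))) ^ j ≤ (1/2:ℝ) ^ j :=
      pow_le_pow_left₀ (by positivity) hf2 j
    calc (m'.choose (j+5) : ℝ) * (1/(n:ℝ)) ^ (j+4)
        ≤ (m':ℝ) ^ (j+5) * (1/(n:ℝ)) ^ (j+4) :=
          mul_le_mul_of_nonneg_right hc (by positivity)
      _ = ((m':ℝ)^5 * (1/(n:ℝ))^4) * ((m':ℝ) * (1/(n:ℝ))) ^ j := e
      _ ≤ (1/2) * (1/2:ℝ)^j := by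
          apply mul_le_mul hf1 hf2' (by positivity) (by norm_num)
      _ = (1/2:ℝ) ^ (j+1) := by rw [pow_succ]; ring
  -- layer cake
  have key : ∫⁻ ω, (M ω : ℝ≥0∞) ∂μ = ∑' (j : ℕ), μ {ω : Ω | j + 1 ≤ M ω} := by
    have hpt : ∀ ω, ((M ω : ℝ≥0∞)) =
        ∑' (j : ℕ), Set.indicator {ω : Ω | j + 1 ≤ M ω} (fun _ => (1 : ℝ≥0∞)) ω := by
      intro ω
      rw [tsum_eq_sum (s := Finset.range (M ω)) (by
        intro j hj
        simp only [Finset.mem_range, not_lt] at hj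
        simp [Set.indicator_apply, Set.mem_setOf_eq]
        omega)]
      have : ∀ j ∈ Finset.range (M ω),
          Set.indicator {ω : Ω | j + 1 ≤ M ω} (fun _ => (1:ℝ≥0∞)) ω = 1 := by
        intro j hj
        simp only [Finset.mem_range] at hj
        simp [Set.indicator_apply, Set.mem_setOf_eq]
        omega
      rw [Finset.sum_congr rfl this]
      simp
    calc ∫⁻ ω, (M ω : ℝ≥0∞) ∂μ
        = ∫⁻ ω, ∑' (j : ℕ), Set.indicator {ω : Ω | j + 1 ≤ M ω} (fun _ => (1:ℝ≥0∞)) ω ∂μ :=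
          lintegral_congr hpt
      _ = ∑' (j : ℕ), ∫⁻ ω, Set.indicator {ω : Ω | j + 1 ≤ M ω} (fun _ => (1:ℝ≥0∞)) ω ∂μ :=
          lintegral_tsum fun j =>
            ((measurable_const.indicator (hM measurableSet_Ici)).aemeasurable)
      _ = ∑' (j : ℕ), μ {ω : Ω | j + 1 ≤ M ω} := by
          congr 1; ext j
          have hms : MeasurableSet {ω : Ω | j + 1 ≤ M ω} := hM measurableSet_Ici
          rw [lintegral_indicator hms]
          simp
  -- tail bound
  have htail : ∑' (j : ℕ), μ {ω : Ω | (j + 4) + 1 ≤ M ω} ≤ 1 := by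
    have hsummable : Summable (fun j : ℕ => (1/2:ℝ)^(j+1)) := by
      have := summable_geometric_of_lt_one (by norm_num : (0:ℝ) ≤ 1/2) (by norm_num)
      exact (summable_nat_add_iff 1).mpr this
    calc ∑' (j : ℕ), μ {ω : Ω | (j + 4) + 1 ≤ M ω}
        ≤ ∑' (j : ℕ), ENNReal.ofReal ((1/2:ℝ)^(j+1)) := by
          apply ENNReal.tsum_le_tsum
          intro j
          have h5j : 1 ≤ j + 5 := by omega
          have := hTail (j+5) h5j
          have heq : {ω : Ω | (j + 4) + 1 ≤ M ω} = {ω : Ω | j + 5 ≤ M ω} := by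
            ext ω
            simp only [Set.mem_setOf_eq]
          rw [heq]
          refine le_trans this (ENNReal.ofReal_le_ofReal ?_)
          have : j + 5 - 1 = j + 4 := by omega
          rw [this]
          exact hterm j
      _ = ENNReal.ofReal (∑' (j : ℕ), (1/2:ℝ)^(j+1)) :=
          (ENNReal.ofReal_tsum_of_nonneg (fun j => by positivity) hsummable).symm
      _ ≤ 1 := by
          have hsum : ∑' (j : ℕ), (1/2:ℝ)^(j+1) = 1 := by
            have : ∀ j : ℕ, (1/2:ℝ)^(j+1) = (1/2:ℝ) * (1/2:ℝ)^j := by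
              intro j; rw [pow_succ]; ring
            rw [tsum_congr this, tsum_mul_left,
              tsum_geometric_of_lt_one (by norm_num) (by norm_num)]
            norm_num
          rw [hsum]
          simp
  -- combine
  have hlint : ∫⁻ ω, (M ω : ℝ≥0∞) ∂μ ≤ 5 := by
    rw [key, ← Summable.sum_add_tsum_nat_add' (f := fun j : ℕ => μ {ω : Ω | j + 1 ≤ M ω})
      (k := 4) ENNReal.summable]
    calc (∑ j ∈ Finset.range 4, μ {ω : Ω | j + 1 ≤ M ω})
          + ∑' (j : ℕ), μ {ω : Ω | (j + 4) + 1 ≤ M ω}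
        ≤ (∑ _j ∈ Finset.range 4, (1:ℝ≥0∞)) + 1 :=
          add_le_add (Finset.sum_le_sum fun j _ => prob_le_one) htail
      _ = 5 := by
          simp only [Finset.sum_const, Finset.card_range, smul_eq_mul, mul_one]
          norm_num
  -- conclude
  rw [integral_eq_lintegral_of_nonneg_ae
    (Filter.Eventually.of_forall fun ω => by positivity) hInt.aestronglyMeasurable]
  have : ∫⁻ ω, ENNReal.ofReal ((M ω : ℝ)) ∂μ = ∫⁻ ω, (M ω : ℝ≥0∞) ∂μ := by
    congr 1; ext ω; rw [ENNReal.ofReal_natCast]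
  rw [this]
  refine ENNReal.toReal_le_of_le_ofReal (by norm_num) ?_
  refine le_trans hlint ?_
  rw [show ((5:ℝ≥0∞)) = ENNReal.ofReal 5 by simp]
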